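/- Let N > 0 and K > N an integer. Then for all t > 0 and d ≥ 0: ∫_0^t (s/t)^{K-N} e^{-c d^2/t} ds/s + ∫_t^∞ e^{-c d^2/s} (t/s)^N ds/s ≤ C ( e^{-c d^2/(2t)} + (1 + d^2/t)^{-N} ), with C depending only on N, K, c. -/

import Mathlib

open MeasureTheory Set

/-- Lebesgue integral of `s ^ r` over `Ioc a b` for `-1 < r`, `0 ≤ a ≤ b`. -/
lemma lint_Ioc_rpow {r : ℝ} (hr : -1 < r) {a b : ℝ} (ha : 0 ≤ a) (hab : a ≤ b) :
    ∫⁻ s in Ioc a b, ENNReal.ofReal (s ^ r) =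
      ENNReal.ofReal ((b ^ (r + 1) - a ^ (r + 1)) / (r + 1)) := by
  have hint : IntegrableOn (fun s : ℝ => s ^ r) (Ioc a b) := by
    have h := intervalIntegral.intervalIntegrable_rpow' (a := a) (b := b) (r := r) hr
    rwa [intervalIntegrable_iff_integrableOn_Ioc_of_le hab] at h
  have hnn : 0 ≤ᵐ[volume.restrict (Ioc a b)] fun s : ℝ => s ^ r := by
    filter_upwards [ae_restrict_mem measurableSet_Ioc] with s hs
    exact Real.rpow_nonneg (le_trans ha hs.1.le) r
  rw [← MeasureTheory.ofReal_integral_eq_lintegral_ofReal hint hnn,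
    ← intervalIntegral.integral_of_le hab, integral_rpow (Or.inl hr)]

/-- Lebesgue integral of `s ^ r` over `Ioi T` for `r < -1`, `0 < T`. -/
lemma lint_Ioi_rpow {r : ℝ} (hr : r < -1) {T : ℝ} (hT : 0 < T) :
    ∫⁻ s in Ioi T, ENNReal.ofReal (s ^ r) = ENNReal.ofReal (-T ^ (r + 1) / (r + 1)) := by
  have hint := integrableOn_Ioi_rpow_of_lt hr hT
  have hnn : 0 ≤ᵐ[volume.restrict (Ioi T)] fun s : ℝ => s ^ r := by
    filter_upwards [ae_restrict_mem measurableSet_Ioi] with s hs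
    exact Real.rpow_nonneg (le_trans hT.le (le_of_lt hs)) r
  rw [← MeasureTheory.ofReal_integral_eq_lintegral_ofReal hint hnn,
    integral_Ioi_rpow_of_lt hr hT]

/-- `e^{-x} (1+x)^K ≤ e ⋅ K!` for `x ≥ 0`. -/
lemma exp_neg_le_aux (K : ℕ) {x : ℝ} (hx : 0 ≤ x) :
    Real.exp (-x) * (1 + x) ^ K ≤ Real.exp 1 * K.factorial := by
  have hK : (0:ℝ) < K.factorial := by positivity
  have h := Real.pow_div_factorial_le_exp (x := 1 + x) (by linarith) K
  rw [div_le_iff₀ hK] at h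
  have h2 : Real.exp (-x) * Real.exp (1 + x) = Real.exp 1 := by
    rw [← Real.exp_add]; ring_nf
  calc Real.exp (-x) * (1 + x) ^ K
      ≤ Real.exp (-x) * (Real.exp (1 + x) * K.factorial) :=
        mul_le_mul_of_nonneg_left h (Real.exp_nonneg _)
    _ = Real.exp 1 * K.factorial := by rw [← mul_assoc, h2]

set_option maxHeartbeats 1000000 in
/-- Let `N > 0`, `c > 0` and `K > N` an integer. Then for all `t > 0`
and `d ≥ 0`:
`∫₀^t (s/t)^{K-N} e^{-c d²/t} ds/s + ∫_t^∞ e^{-c d²/s} (t/s)^N ds/s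
  ≤ C ( e^{-c d²/(2t)} + (1 + d²/t)^{-N} )`, with `C = C(N,K,c)`. -/
theorem stmt_11 (N c : ℝ) (hN : 0 < N) (hc : 0 < c) (K : ℕ) (hK : N < K) :
    ∃ C > (0:ℝ), ∀ t d : ℝ, 0 < t → 0 ≤ d →
      (∫⁻ s in Ioo (0:ℝ) t,
          ENNReal.ofReal ((s / t) ^ ((K : ℝ) - N) * Real.exp (-c * d ^ 2 / t) * s⁻¹))
        + (∫⁻ s in Ioi t,
            ENNReal.ofReal (Real.exp (-c * d ^ 2 / s) * (t / s) ^ N * s⁻¹))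
        ≤ ENNReal.ofReal
            (C * (Real.exp (-c * d ^ 2 / (2 * t)) + (1 + d ^ 2 / t) ^ (-N))) := by
  set β : ℝ := (K : ℝ) - N with hβdef
  have hβ : 0 < β := by simp only [hβdef]; linarith
  have hμ : 0 < min 1 c := lt_min one_pos hc
  set D : ℝ := Real.exp 1 * K.factorial * ((min 1 c) ^ K)⁻¹ with hDdef
  have hD : 0 < D := by positivity
  refine ⟨1 / β + (D / β + 1 / N), by positivity, ?_⟩
  intro t d ht hd
  set a : ℝ := d ^ 2 / t with hadef
  have ha : 0 ≤ a := by positivity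
  have h1a : (0:ℝ) < 1 + a := by linarith
  set E : ℝ := Real.exp (-c * d ^ 2 / (2 * t)) with hEdef
  set P : ℝ := (1 + a) ^ (-N) with hPdef
  have hE : 0 ≤ E := Real.exp_nonneg _
  have hP : 0 ≤ P := Real.rpow_nonneg h1a.le _
  have hdsq : d ^ 2 = a * t := by rw [hadef, div_mul_cancel₀ _ ht.ne']
  have htβpos : (0:ℝ) < t ^ β := Real.rpow_pos_of_pos ht β
  -- Part A
  have hA : (∫⁻ s in Ioo (0:ℝ) t,
      ENNReal.ofReal ((s / t) ^ β * Real.exp (-c * d ^ 2 / t) * s⁻¹))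
      ≤ ENNReal.ofReal (1 / β * E) := by
    have step1 : (∫⁻ s in Ioo (0:ℝ) t,
        ENNReal.ofReal ((s / t) ^ β * Real.exp (-c * d ^ 2 / t) * s⁻¹))
        ≤ ∫⁻ s in Ioo (0:ℝ) t,
            ENNReal.ofReal (E * (t ^ β)⁻¹) * ENNReal.ofReal (s ^ (β - 1)) := by
      apply lintegral_mono_ae
      filter_upwards [ae_restrict_mem measurableSet_Ioo] with s hs
      rw [← ENNReal.ofReal_mul (by positivity)]
      apply ENNReal.ofReal_le_ofReal
      have hs0 : 0 < s := hs.1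
      have e1 : (s / t) ^ β = s ^ β / t ^ β := Real.div_rpow hs0.le ht.le β
      have e2 : s ^ (β - 1) = s ^ β / s := Real.rpow_sub_one hs0.ne' β
      have hexp : Real.exp (-c * d ^ 2 / t) ≤ E := by
        rw [hEdef]
        apply Real.exp_le_exp.mpr
        rw [neg_mul, neg_div, neg_div, neg_le_neg_iff,
          div_le_div_iff₀ (by positivity) ht]
        nlinarith [mul_nonneg (mul_nonneg hc.le (sq_nonneg d)) ht.le]
      have key : (s / t) ^ β * Real.exp (-c * d ^ 2 / t) * s⁻¹
          = (s ^ β / s * (t ^ β)⁻¹) * Real.exp (-c * d ^ 2 / t) := by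
        rw [e1]; ring
      rw [key, e2]
      calc (s ^ β / s * (t ^ β)⁻¹) * Real.exp (-c * d ^ 2 / t)
          ≤ (s ^ β / s * (t ^ β)⁻¹) * E :=
            mul_le_mul_of_nonneg_left hexp (by positivity)
        _ = E * (t ^ β)⁻¹ * (s ^ β / s) := by ring
    refine le_trans step1 ?_
    rw [lintegral_const_mul' _ _ ENNReal.ofReal_ne_top,
      setLIntegral_congr (Ioo_ae_eq_Ioc (a := (0:ℝ)) (b := t)),
      lint_Ioc_rpow (by linarith) le_rfl ht.le]
    have hz : (0:ℝ) ^ (β - 1 + 1) = 0 := Real.zero_rpow (by linarith)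
    rw [hz, ← ENNReal.ofReal_mul (by positivity)]
    apply ENNReal.ofReal_le_ofReal
    have hb1 : β - 1 + 1 = β := by ring
    rw [hb1]
    have htβ : t ^ β * (t ^ β)⁻¹ = 1 := mul_inv_cancel₀ htβpos.ne'
    have h' : E * (t ^ β)⁻¹ * ((t ^ β - 0) / β) = t ^ β * (t ^ β)⁻¹ * (E / β) := by ring
    rw [h', htβ, one_mul]
    exact le_of_eq (by ring)
  -- Part B : split the outer integral at T = (1+a) t
  set T : ℝ := (1 + a) * t with hTdef
  have hT0 : 0 < T := by positivity
  have htT : t ≤ T := by nlinarith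
  have hsplit : (∫⁻ s in Ioi t,
      ENNReal.ofReal (Real.exp (-c * d ^ 2 / s) * (t / s) ^ N * s⁻¹))
      = (∫⁻ s in Ioc t T,
          ENNReal.ofReal (Real.exp (-c * d ^ 2 / s) * (t / s) ^ N * s⁻¹))
        + ∫⁻ s in Ioi T,
            ENNReal.ofReal (Real.exp (-c * d ^ 2 / s) * (t / s) ^ N * s⁻¹) := by
    rw [← lintegral_union measurableSet_Ioi Ioc_disjoint_Ioi_same,
      Ioc_union_Ioi_eq_Ioi htT]
  -- B1 : middle range
  have hB1 : (∫⁻ s in Ioc t T,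
      ENNReal.ofReal (Real.exp (-c * d ^ 2 / s) * (t / s) ^ N * s⁻¹))
      ≤ ENNReal.ofReal (D / β * P) := by
    have step1 : (∫⁻ s in Ioc t T,
        ENNReal.ofReal (Real.exp (-c * d ^ 2 / s) * (t / s) ^ N * s⁻¹))
        ≤ ∫⁻ s in Ioc t T,
            ENNReal.ofReal (D * (((1 + a) ^ K : ℝ))⁻¹ * (t ^ β)⁻¹)
              * ENNReal.ofReal (s ^ (β - 1)) := by
      apply lintegral_mono_ae
      filter_upwards [ae_restrict_mem measurableSet_Ioc] with s hs
      rw [← ENNReal.ofReal_mul (by positivity)]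
      apply ENNReal.ofReal_le_ofReal
      have hs0 : 0 < s := lt_trans ht hs.1
      set x : ℝ := c * d ^ 2 / s with hxdef
      have hx : 0 ≤ x := by positivity
      have harg : -c * d ^ 2 / s = -x := by rw [hxdef]; ring
      have hlowpos : 0 < min 1 c * ((1 + a) * (t / s)) := by positivity
      have hlow : min 1 c * ((1 + a) * (t / s)) ≤ 1 + x := by
        have hts1 : t / s ≤ 1 := (div_le_one hs0).mpr hs.1.le
        have h1 : min 1 c * (t / s) ≤ 1 := by
          calc min 1 c * (t / s) ≤ 1 * 1 :=
            mul_le_mul (min_le_left 1 c) hts1 (by positivity) one_pos.le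
          _ = 1 := by norm_num
        have h2 : min 1 c * (a * (t / s)) ≤ x := by
          rw [hxdef, hdsq]
          have hrw : c * (a * t) / s = c * (a * (t / s)) := by ring
          rw [hrw]
          exact mul_le_mul_of_nonneg_right (min_le_right 1 c) (by positivity)
        nlinarith
      have hexp : Real.exp (-x) ≤ Real.exp 1 * K.factorial * ((1 + x) ^ K)⁻¹ := by
        rw [← div_eq_mul_inv, le_div_iff₀ (by positivity)]
        exact exp_neg_le_aux K hx
      have hpowle : ((1 + x) ^ K)⁻¹ ≤ ((min 1 c * ((1 + a) * (t / s))) ^ K)⁻¹ := by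
        apply inv_anti₀ (by positivity)
        exact pow_le_pow_left₀ hlowpos.le hlow K
      have hexpand : ((min 1 c * ((1 + a) * (t / s))) ^ K)⁻¹
          = ((min 1 c) ^ K)⁻¹ * (((1 + a) ^ K : ℝ))⁻¹ * (s / t) ^ K := by
        rw [mul_pow, mul_pow, div_pow, div_pow, mul_inv, mul_inv, inv_div]
        ring
      have hbound : Real.exp (-x) ≤ D * (((1 + a) ^ K : ℝ))⁻¹ * ((s / t) ^ K : ℝ) := by
        calc Real.exp (-x)
            ≤ Real.exp 1 * K.factorial * ((min 1 c * ((1 + a) * (t / s))) ^ K)⁻¹ :=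
              le_trans hexp (mul_le_mul_of_nonneg_left hpowle (by positivity))
          _ = D * (((1 + a) ^ K : ℝ))⁻¹ * ((s / t) ^ K : ℝ) := by
              rw [hexpand, hDdef]; ring
      have hcomb : (((s / t) ^ K : ℝ)) * (t / s) ^ N = (s / t) ^ β := by
        have hst : (0:ℝ) < s / t := by positivity
        rw [hβdef, sub_eq_add_neg, Real.rpow_add hst, Real.rpow_natCast,
          Real.rpow_neg hst.le, ← Real.inv_rpow hst.le, inv_div]
      have hN0 : (0:ℝ) ≤ (t / s) ^ N := Real.rpow_nonneg (by positivity) N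
      rw [harg]
      calc Real.exp (-x) * (t / s) ^ N * s⁻¹
          ≤ (D * (((1 + a) ^ K : ℝ))⁻¹ * ((s / t) ^ K : ℝ)) * (t / s) ^ N * s⁻¹ := by
            apply mul_le_mul_of_nonneg_right
              (mul_le_mul_of_nonneg_right hbound hN0) (by positivity)
        _ = D * (((1 + a) ^ K : ℝ))⁻¹ * ((((s / t) ^ K : ℝ)) * (t / s) ^ N) * s⁻¹ := by
            ring
        _ = D * (((1 + a) ^ K : ℝ))⁻¹ * (s / t) ^ β * s⁻¹ := by rw [hcomb]
        _ = D * (((1 + a) ^ K : ℝ))⁻¹ * (t ^ β)⁻¹ * s ^ (β - 1) := by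
            rw [Real.div_rpow hs0.le ht.le, Real.rpow_sub_one hs0.ne']; ring
    refine le_trans step1 ?_
    rw [lintegral_const_mul' _ _ ENNReal.ofReal_ne_top,
      lint_Ioc_rpow (by linarith) ht.le htT,
      ← ENNReal.ofReal_mul (by positivity)]
    apply ENNReal.ofReal_le_ofReal
    have hb1 : β - 1 + 1 = β := by ring
    rw [hb1]
    have hTβ : T ^ β = (1 + a) ^ β * t ^ β := by
      rw [hTdef, Real.mul_rpow h1a.le ht.le]
    have hiK : (((1 + a) ^ K : ℝ))⁻¹ = (1 + a) ^ (-(K:ℝ)) := by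
      rw [Real.rpow_neg h1a.le, Real.rpow_natCast]
    have hmul : (1 + a) ^ (-(K:ℝ)) * (1 + a) ^ β = P := by
      rw [hPdef, ← Real.rpow_add h1a,
        show -(K:ℝ) + β = -N from by rw [hβdef]; ring]
    have htβ : t ^ β * (t ^ β)⁻¹ = 1 := mul_inv_cancel₀ htβpos.ne'
    have h1aβ : (0:ℝ) ≤ (1 + a) ^ β := Real.rpow_nonneg h1a.le β
    calc D * (((1 + a) ^ K : ℝ))⁻¹ * (t ^ β)⁻¹ * ((T ^ β - t ^ β) / β)
        ≤ D * (((1 + a) ^ K : ℝ))⁻¹ * (t ^ β)⁻¹ * ((1 + a) ^ β * t ^ β / β) := by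
          rw [hTβ]
          exact mul_le_mul_of_nonneg_left
            ((div_le_div_iff_of_pos_right hβ).mpr (sub_le_self _ (by positivity))) (by positivity)
        _ = D / β * ((1 + a) ^ (-(K:ℝ)) * (1 + a) ^ β) * (t ^ β * (t ^ β)⁻¹) := by
          rw [hiK]; ring
        _ = D / β * P := by rw [hmul, htβ, mul_one]
  -- B2 : tail
  have hB2 : (∫⁻ s in Ioi T,
      ENNReal.ofReal (Real.exp (-c * d ^ 2 / s) * (t / s) ^ N * s⁻¹))
      ≤ ENNReal.ofReal (1 / N * P) := by
    have step1 : (∫⁻ s in Ioi T,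
        ENNReal.ofReal (Real.exp (-c * d ^ 2 / s) * (t / s) ^ N * s⁻¹))
        ≤ ∫⁻ s in Ioi T,
            ENNReal.ofReal (t ^ N) * ENNReal.ofReal (s ^ (-N - 1)) := by
      apply lintegral_mono_ae
      filter_upwards [ae_restrict_mem measurableSet_Ioi] with s hs
      rw [← ENNReal.ofReal_mul (by positivity)]
      apply ENNReal.ofReal_le_ofReal
      have hs0 : 0 < s := lt_trans hT0 hs
      have hexp1 : Real.exp (-c * d ^ 2 / s) ≤ 1 := by
        apply Real.exp_le_one_iff.mpr
        rw [neg_mul, neg_div]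
        simp only [Left.neg_nonpos_iff]
        positivity
      have e1 : (t / s) ^ N = t ^ N * (s ^ N)⁻¹ := by
        rw [Real.div_rpow ht.le hs0.le, div_eq_mul_inv]
      have e2 : s ^ (-N - 1) = (s ^ N)⁻¹ * s⁻¹ := by
        have : -N - 1 = -N - 1 := rfl
        rw [show -N - 1 = -N + -1 by ring, Real.rpow_add hs0, Real.rpow_neg hs0.le,
          Real.rpow_neg_one]
      calc Real.exp (-c * d ^ 2 / s) * (t / s) ^ N * s⁻¹
          ≤ 1 * (t / s) ^ N * s⁻¹ := by
            apply mul_le_mul_of_nonneg_right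
              (mul_le_mul_of_nonneg_right hexp1 (Real.rpow_nonneg (by positivity) N))
              (by positivity)
        _ = t ^ N * ((s ^ N)⁻¹ * s⁻¹) := by rw [one_mul, e1]; ring
        _ = t ^ N * s ^ (-N - 1) := by rw [e2]
    refine le_trans step1 ?_
    rw [lintegral_const_mul' _ _ ENNReal.ofReal_ne_top,
      lint_Ioi_rpow (by linarith) hT0,
      ← ENNReal.ofReal_mul (by positivity)]
    apply ENNReal.ofReal_le_ofReal
    have hb1 : -N - 1 + 1 = -N := by ring
    rw [hb1]
    have hTN : T ^ (-N) = (1 + a) ^ (-N) * t ^ (-N) := by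
      rw [hTdef, Real.mul_rpow h1a.le ht.le]
    have htN : t ^ N * t ^ (-N) = 1 := by
      rw [← Real.rpow_add ht]; simp
    apply le_of_eq
    calc t ^ N * (-T ^ (-N) / (-N)) = t ^ N * (T ^ (-N) / N) := by
          rw [neg_div_neg_eq]
      _ = (t ^ N * t ^ (-N)) * ((1 + a) ^ (-N)) / N := by rw [hTN]; ring
      _ = 1 / N * P := by rw [htN, hPdef]; ring
  -- combine
  rw [hsplit]
  calc (∫⁻ s in Ioo (0:ℝ) t,
      ENNReal.ofReal ((s / t) ^ β * Real.exp (-c * d ^ 2 / t) * s⁻¹))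
        + ((∫⁻ s in Ioc t T,
            ENNReal.ofReal (Real.exp (-c * d ^ 2 / s) * (t / s) ^ N * s⁻¹))
          + ∫⁻ s in Ioi T,
              ENNReal.ofReal (Real.exp (-c * d ^ 2 / s) * (t / s) ^ N * s⁻¹))
      ≤ ENNReal.ofReal (1 / β * E)
        + (ENNReal.ofReal (D / β * P) + ENNReal.ofReal (1 / N * P)) :=
        add_le_add hA (add_le_add hB1 hB2)
    _ = ENNReal.ofReal (1 / β * E + (D / β * P + 1 / N * P)) := by
        rw [← ENNReal.ofReal_add (by positivity) (by positivity),
          ← ENNReal.ofReal_add (by positivity) (by positivity)]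
    _ ≤ ENNReal.ofReal ((1 / β + (D / β + 1 / N)) * (E + P)) := by
        apply ENNReal.ofReal_le_ofReal
        nlinarith [mul_nonneg (by positivity : (0:ℝ) ≤ D / β + 1 / N) hE,
          mul_nonneg (by positivity : (0:ℝ) ≤ 1 / β) hP]
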